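/- Let p ≡ 3 (mod 4) be a prime and let s be a binary sequence of period p whose support set is a (p, (p+1)/2, (p+1)/4) cyclic difference set. Let A be the circulant matrix of s. Then gcd(2^p - 1, det(A)) = 1, and hence the 2-adic complexity of s equals p. -/

import Mathlib

open Matrix Finset

private lemma sum_binary {p : ℕ} [NeZero p] (f g : ZMod p → ℤ)
    (hf : ∀ i, f i = 0 ∨ f i = 1) (hg : ∀ i, g i = 0 ∨ g i = 1) :
    ∑ i : ZMod p, f i * g i
      = ((Finset.univ.filter fun i => f i = 1 ∧ g i = 1).card : ℤ) := by
  rw [← Finset.sum_boole]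
  refine Finset.sum_congr rfl fun i _ => ?_
  rcases hf i with h | h <;> rcases hg i with h' | h' <;> simp [h, h']

theorem stmt7 (p : ℕ) (hp : p.Prime) (hp4 : p % 4 = 3) [NeZero p]
    (s : ZMod p → ℤ) (hbin : ∀ i, s i = 0 ∨ s i = 1)
    (hcard : (Finset.univ.filter fun i : ZMod p => s i = 1).card = (p + 1) / 2)
    (hdiff : ∀ τ : ZMod p, τ ≠ 0 →
      ((Finset.univ.filter fun i : ZMod p => s i = 1) ∩
        ((Finset.univ.filter fun i : ZMod p => s i = 1)).image (· + τ)).card = (p + 1) / 4) :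
    Int.gcd (2 ^ p - 1) (Matrix.circulant s).det = 1 ∧
    Int.gcd (∑ i ∈ Finset.range p, s (i : ZMod p) * 2 ^ i) (2 ^ p - 1) = 1 := by
  have hp3 : 3 ≤ p := by
    rcases Nat.lt_or_ge p 3 with h | h
    · interval_cases p <;> omega
    · exact h
  set L : ℕ := (p + 1) / 4 with hLdef
  have hL4 : 4 * L = p + 1 := by omega
  -- The key autocorrelation identity A * Aᵀ = L • (1 + J)
  have hAAT : circulant s * (circulant s)ᵀ
      = (L : ℤ) • (1 + Matrix.replicateCol Unit (fun _ : ZMod p => (1 : ℤ))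
          * Matrix.replicateRow Unit (fun _ : ZMod p => (1 : ℤ))) := by
    ext i j
    have hLHS : (circulant s * (circulant s)ᵀ) i j = ∑ k : ZMod p, s (i - k) * s (j - k) := by
      simp [Matrix.mul_apply, Matrix.circulant_apply, Matrix.transpose_apply]
    rw [hLHS]
    have hre : ∑ k : ZMod p, s (i - k) * s (j - k)
        = ∑ m : ZMod p, s m * s (m + (j - i)) := by
      refine Fintype.sum_equiv (Equiv.subLeft i) _ _ fun k => ?_
      simp only [Equiv.subLeft_apply]
      congr 2
      abel
    by_cases hij : i = j
    · subst hij
      have h0 : ∑ m : ZMod p, s m * s (m + (i - i)) = ∑ m : ZMod p, s m * s m := by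
        simp
      rw [hre, h0, sum_binary s s hbin hbin]
      have hfe : (Finset.univ.filter fun m : ZMod p => s m = 1 ∧ s m = 1)
          = Finset.univ.filter fun m : ZMod p => s m = 1 := by
        apply Finset.filter_congr; simp
      rw [hfe, hcard]
      simp only [Matrix.smul_apply, Matrix.add_apply, Matrix.one_apply_eq,
        Matrix.mul_apply, Matrix.replicateCol_apply, Matrix.replicateRow_apply]
      have h2 : (p + 1) / 2 = 2 * L := by omega
      rw [h2]; push_cast; simp [smul_eq_mul]; ring
    · set τ : ZMod p := j - i with hτdef
      have hτ : τ ≠ 0 := fun h => hij (sub_eq_zero.mp h).symm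
      have hre2 : ∑ m : ZMod p, s m * s (m + τ) = ∑ n : ZMod p, s (n - τ) * s n := by
        refine Fintype.sum_equiv (Equiv.addRight τ) _ _ fun m => ?_
        simp
      rw [hre, hre2, sum_binary _ s (fun n => hbin _) hbin]
      have hset : (Finset.univ.filter fun n : ZMod p => s (n - τ) = 1 ∧ s n = 1)
          = (Finset.univ.filter fun i : ZMod p => s i = 1) ∩
            ((Finset.univ.filter fun i : ZMod p => s i = 1)).image (· + τ) := by
        ext n
        simp only [Finset.mem_filter, Finset.mem_inter, Finset.mem_image, Finset.mem_univ,
          true_and]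
        constructor
        · rintro ⟨h1, h2⟩
          exact ⟨h2, n - τ, h1, by abel⟩
        · rintro ⟨h2, x, hx, hxe⟩
          refine ⟨?_, h2⟩
          have : x = n - τ := by rw [← hxe]; abel
          rwa [← this]
      rw [hset, hdiff τ hτ]
      simp only [Matrix.smul_apply, Matrix.add_apply, Matrix.one_apply_ne hij,
        Matrix.mul_apply, Matrix.replicateCol_apply, Matrix.replicateRow_apply]
      simp
  have hcardZ : Fintype.card (ZMod p) = p := ZMod.card p
  have hdet1J : (1 + Matrix.replicateCol Unit (fun _ : ZMod p => (1 : ℤ))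
      * Matrix.replicateRow Unit (fun _ : ZMod p => (1 : ℤ))).det = (1 + p : ℤ) := by
    rw [Matrix.det_one_add_replicateCol_mul_replicateRow]
    simp [dotProduct, hcardZ]
  have hdet2 : (circulant s).det ^ 2 = (L : ℤ) ^ p * (p + 1) := by
    have h := congrArg Matrix.det hAAT
    rw [Matrix.det_mul, Matrix.det_transpose, Matrix.det_smul, hdet1J, hcardZ] at h
    rw [sq, h]; ring
  have part1 : Int.gcd (2 ^ p - 1) (circulant s).det = 1 := by
    by_contra h
    obtain ⟨q, hq, hqd⟩ := Nat.exists_prime_and_dvd h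
    haveI : Fact q.Prime := ⟨hq⟩
    have hqg : (q : ℤ) ∣ (Int.gcd (2 ^ p - 1) (circulant s).det : ℤ) :=
      Int.natCast_dvd_natCast.mpr hqd
    have hq1 : (q : ℤ) ∣ 2 ^ p - 1 := hqg.trans (Int.gcd_dvd_left _ _)
    have hq2 : (q : ℤ) ∣ (circulant s).det := hqg.trans (Int.gcd_dvd_right _ _)
    have hqprime : Prime (q : ℤ) := Nat.prime_iff_prime_int.mp hq
    have hq3 : (q : ℤ) ∣ (L : ℤ) ^ p * (p + 1) := by
      rw [← hdet2, sq]; exact hq2.mul_right _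
    -- hence q ∣ p + 1 in ℕ, so q ≤ p + 1
    have hqp1 : q ∣ p + 1 := by
      rcases hqprime.dvd_mul.mp hq3 with h1 | h1
      · have hL : (q : ℤ) ∣ (L : ℤ) := hqprime.dvd_of_dvd_pow h1
        have : q ∣ L := by exact_mod_cast hL
        exact this.trans ⟨4, by omega⟩
      · exact_mod_cast h1
    have hqle : q ≤ p + 1 := Nat.le_of_dvd (by omega) hqp1
    -- q is odd
    have hq2' : q ≠ 2 := by
      intro hq2e
      subst hq2e
      have hd1 : (2 : ℤ) ∣ 2 ^ p - (2 ^ p - 1) := by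
        refine dvd_sub (dvd_pow_self 2 (by omega)) ?_
        exact_mod_cast hq1
      norm_num at hd1
    have h2p1 : (2 : ZMod q) ^ p = 1 := by
      have h0 : ((2 ^ p - 1 : ℤ) : ZMod q) = 0 := (ZMod.intCast_zmod_eq_zero_iff_dvd _ q).mpr hq1
      push_cast at h0
      linear_combination h0
    have horder : orderOf (2 : ZMod q) ∣ p := orderOf_dvd_of_pow_eq_one h2p1
    rcases Nat.Prime.eq_one_or_self_of_dvd hp _ horder with ho | ho
    · have h21 : (2 : ZMod q) = 1 := orderOf_eq_one_iff.mp ho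
      have h10 : (1 : ZMod q) = 0 := by linear_combination h21
      exact one_ne_zero h10
    · have h20 : (2 : ZMod q) ≠ 0 := by
        intro h0
        have hd2 : q ∣ 2 := (ZMod.natCast_eq_zero_iff 2 q).mp (by exact_mod_cast h0)
        exact hq2' ((Nat.prime_dvd_prime_iff_eq hq Nat.prime_two).mp hd2)
      have hfermat := ZMod.pow_card_sub_one_eq_one h20
      have hpq : p ∣ q - 1 := ho ▸ orderOf_dvd_of_pow_eq_one hfermat
      have hq2le : 2 ≤ q := hq.two_le
      have hple : p ≤ q - 1 := Nat.le_of_dvd (by omega) hpq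
      have h2q : 2 ∣ q := by omega
      have := (Nat.prime_dvd_prime_iff_eq Nat.prime_two hq).mp h2q
      omega
  refine ⟨part1, ?_⟩
  set N : ℤ := ∑ i ∈ Finset.range p, s (i : ZMod p) * 2 ^ i with hNdef
  by_contra h
  obtain ⟨q, hq, hqd⟩ := Nat.exists_prime_and_dvd h
  haveI : Fact q.Prime := ⟨hq⟩
  have hqg : (q : ℤ) ∣ (Int.gcd N (2 ^ p - 1) : ℤ) := Int.natCast_dvd_natCast.mpr hqd
  have hqN : (q : ℤ) ∣ N := hqg.trans (Int.gcd_dvd_left _ _)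
  have hqM : (q : ℤ) ∣ 2 ^ p - 1 := hqg.trans (Int.gcd_dvd_right _ _)
  have h2p1 : (2 : ZMod q) ^ p = 1 := by
    have h0 : ((2 ^ p - 1 : ℤ) : ZMod q) = 0 := (ZMod.intCast_zmod_eq_zero_iff_dvd _ q).mpr hqM
    push_cast at h0
    linear_combination h0
  have hmul : ∀ a b : ZMod p, (2 : ZMod q) ^ (a + b).val = 2 ^ a.val * 2 ^ b.val := by
    intro a b
    rw [ZMod.val_add, ← pow_eq_pow_mod _ h2p1, pow_add]
  set w : ZMod p → ZMod q := fun j => (2 : ZMod q) ^ (-j).val with hwdef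
  have hNsum : ∑ m : ZMod p, ((s m : ZMod q)) * 2 ^ m.val = 0 := by
    have h0 : ((N : ℤ) : ZMod q) = 0 := (ZMod.intCast_zmod_eq_zero_iff_dvd _ q).mpr hqN
    rw [hNdef] at h0
    push_cast at h0
    rw [← h0]
    refine Finset.sum_nbij' (fun m => m.val) (fun i => (i : ZMod p)) ?_ ?_ ?_ ?_ ?_
    · intro a _
      exact Finset.mem_range.mpr (ZMod.val_lt a)
    · intro a _
      exact Finset.mem_univ _
    · intro a _
      exact ZMod.natCast_rightInverse a
    · intro a ha
      exact ZMod.val_cast_of_lt (Finset.mem_range.mp ha)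
    · intro a _
      rw [ZMod.natCast_rightInverse a]
  have hker : ((circulant s).map (Int.cast : ℤ → ZMod q)) *ᵥ w = 0 := by
    funext i
    have hmv : (((circulant s).map (Int.cast : ℤ → ZMod q)) *ᵥ w) i
        = ∑ j : ZMod p, ((s (i - j) : ZMod q)) * 2 ^ (-j).val := by
      simp [Matrix.mulVec, dotProduct, Matrix.map_apply, Matrix.circulant_apply, hwdef]
    have hre : ∑ j : ZMod p, ((s (i - j) : ZMod q)) * 2 ^ (-j).val
        = ∑ m : ZMod p, ((s m : ZMod q)) * 2 ^ (m - i).val := by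
      refine Fintype.sum_equiv (Equiv.subLeft i) _ _ fun j => ?_
      simp only [Equiv.subLeft_apply]
      congr 3
      abel
    have hsplit : ∀ m : ZMod p, ((s m : ZMod q)) * 2 ^ (m - i).val
        = ((s m : ZMod q)) * 2 ^ m.val * 2 ^ (-i).val := by
      intro m
      rw [sub_eq_add_neg, hmul]
      ring
    rw [hmv, hre]
    simp only [hsplit]
    rw [← Finset.sum_mul, hNsum, zero_mul]
    simp
  have hwne : w ≠ 0 := by
    intro h0
    have h1 := congrFun h0 0
    simp [hwdef] at h1
  have hdet0 : ((circulant s).map (Int.cast : ℤ → ZMod q)).det = 0 :=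
    Matrix.exists_mulVec_eq_zero_iff.mp ⟨w, hwne, hker⟩
  have hcast : (((circulant s).det : ℤ) : ZMod q) = 0 := by
    have h2 := RingHom.map_det (Int.castRingHom (ZMod q)) (circulant s)
    simp only [RingHom.mapMatrix_apply, Int.coe_castRingHom] at h2
    rw [h2]
    exact hdet0
  have hqdet : (q : ℤ) ∣ (circulant s).det := (ZMod.intCast_zmod_eq_zero_iff_dvd _ q).mp hcast
  have hfin : (q : ℤ) ∣ (1 : ℤ) := by
    have hg := Int.dvd_gcd hqM hqdet
    rw [part1] at hg; exact_mod_cast hg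
  have : q ∣ 1 := by exact_mod_cast hfin
  exact hq.ne_one (Nat.dvd_one.mp this)
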